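/- Let H₀ > 0 and v* = ±√(2H₀), and consider the 2×2 matrices B̂₁ = [[1, −v*/2],[−v*/2, 0]] and, for a symmetric positive definite k×k matrix M̂, the 2k×2k matrix B̂₂ = [[M̂⁻¹, (v*/2)I],[(v*/2)I, 0]]. Then J·B̂₁ has eigenvalues ±v*/2 (hence is hyperbolic), and J·B̂₂ is hyperbolic: every eigenvalue μ of J·B̂₂ satisfies μ² ≥ (v*)²/4 > 0 after conjugating by the symplectic matrix diag(Aᵀ, A⁻¹) with AᵀM̂A = I and applying the shear reduction, so that J·B̂₂ is conjugate to J·diag(I, ((v*)²/4)I) whose eigenvalues are ±|v*|/2. -/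
import Mathlib


open Matrix

lemma aux_fromBlocks_sub {l m : Type*} {α : Type*} [Sub α]
    (A A' : Matrix l l α) (B B' : Matrix l m α) (C C' : Matrix m l α) (D D' : Matrix m m α) :
    fromBlocks A B C D - fromBlocks A' B' C' D' =
      fromBlocks (A - A') (B - B') (C - C') (D - D') := by
  ext i j
  cases i <;> cases j <;> simp [Matrix.sub_apply]

lemma aux_map_smul_one {n : Type*} [DecidableEq n] [Fintype n] (c : ℝ) :
    ((c • (1 : Matrix n n ℝ)).map (algebraMap ℝ ℂ)) = (c : ℂ) • 1 := by
  ext i j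
  by_cases h : i = j <;> simp [Matrix.map_apply, Matrix.one_apply, h]

/-- Hyperbolicity at hyperbolic infinity: with `v* = ±√(2H₀)`, `H₀ > 0`,
`J·B̂₁` has eigenvalues `±v*/2`, and for symmetric positive definite `M̂`,
`J·B̂₂` with `B̂₂ = [[M̂⁻¹,(v*/2)I],[(v*/2)I,0]]` is hyperbolic with eigenvalues `±|v*|/2`. -/
theorem stmt19 (k : ℕ) (hk : 0 < k) (H₀ vstar : ℝ) (hH : 0 < H₀)
    (hv : vstar ^ 2 = 2 * H₀)
    (Mhat : Matrix (Fin k) (Fin k) ℝ) (hMs : Mhat.IsSymm) (hMpd : Mhat.PosDef) :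
    let J2 : Matrix (Fin 2) (Fin 2) ℝ := !![0, -1; 1, 0]
    let B₁ : Matrix (Fin 2) (Fin 2) ℝ := !![1, -vstar / 2; -vstar / 2, 0]
    let J : Matrix (Fin k ⊕ Fin k) (Fin k ⊕ Fin k) ℝ := fromBlocks 0 (-1) 1 0
    let B₂ : Matrix (Fin k ⊕ Fin k) (Fin k ⊕ Fin k) ℝ :=
      fromBlocks Mhat⁻¹ ((vstar / 2) • 1) ((vstar / 2) • 1) 0
    spectrum ℝ (J2 * B₁) = {vstar / 2, -vstar / 2} ∧
    spectrum ℂ ((J * B₂).map (algebraMap ℝ ℂ)) =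
      {((|vstar| / 2 : ℝ) : ℂ), -((|vstar| / 2 : ℝ) : ℂ)} ∧
    (∀ μ : ℂ, μ ∈ spectrum ℂ ((J * B₂).map (algebraMap ℝ ℂ)) → μ.re ≠ 0) := by
  intro J2 B₁ J B₂
  have hvne : vstar ≠ 0 := by
    intro h; rw [h] at hv; nlinarith
  -- Part 1
  have part1 : spectrum ℝ (J2 * B₁) = {vstar / 2, -vstar / 2} := by
    ext μ
    rw [spectrum.mem_iff, Matrix.isUnit_iff_isUnit_det, isUnit_iff_ne_zero, not_ne_iff]
    have hdet : (algebraMap ℝ (Matrix (Fin 2) (Fin 2) ℝ) μ - J2 * B₁).det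
        = (μ - vstar / 2) * (μ + vstar / 2) := by
      simp only [J2, B₁, Matrix.det_fin_two, Matrix.sub_apply, Matrix.mul_apply,
        Fin.sum_univ_two, Matrix.algebraMap_matrix_apply, Matrix.cons_val', Matrix.cons_val_zero,
        Matrix.cons_val_one, Matrix.head_cons, Matrix.head_fin_const, Matrix.empty_val',
        Matrix.cons_val_fin_one]
      norm_num; ring
    rw [hdet]
    simp only [Set.mem_insert_iff, Set.mem_singleton_iff, mul_eq_zero, sub_eq_zero,
      add_eq_zero_iff_eq_neg, neg_div]
  -- Part 2: compute the block matrix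
  have hprod : J * B₂ = fromBlocks ((-(vstar / 2)) • 1) 0 Mhat⁻¹ ((vstar / 2) • 1) := by
    simp [J, B₂, Matrix.fromBlocks_multiply, neg_smul]
  have hmap : (J * B₂).map (algebraMap ℝ ℂ)
      = fromBlocks (((-(vstar / 2) : ℝ) : ℂ) • 1) 0 (Mhat⁻¹.map (algebraMap ℝ ℂ))
          (((vstar / 2 : ℝ) : ℂ) • 1) := by
    rw [hprod, Matrix.fromBlocks_map, aux_map_smul_one, aux_map_smul_one]
    simp
  have hmem : ∀ μ : ℂ, μ ∈ spectrum ℂ ((J * B₂).map (algebraMap ℝ ℂ)) ↔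
      (μ + (vstar / 2 : ℝ)) ^ k * (μ - (vstar / 2 : ℝ)) ^ k = 0 := by
    intro μ
    rw [spectrum.mem_iff, Matrix.isUnit_iff_isUnit_det, isUnit_iff_ne_zero, not_ne_iff]
    have hblocks : algebraMap ℂ (Matrix (Fin k ⊕ Fin k) (Fin k ⊕ Fin k) ℂ) μ
        - (J * B₂).map (algebraMap ℝ ℂ)
        = fromBlocks ((μ + (vstar / 2 : ℝ)) • 1) 0 (-(Mhat⁻¹.map (algebraMap ℝ ℂ)))
            ((μ - (vstar / 2 : ℝ)) • 1) := by
      have e11 : μ • (1 : Matrix (Fin k) (Fin k) ℂ) - ((-(vstar / 2) : ℝ) : ℂ) • 1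
          = (μ + (vstar / 2 : ℝ)) • 1 := by
        rw [← sub_smul]; congr 1; push_cast; ring
      have e22 : μ • (1 : Matrix (Fin k) (Fin k) ℂ) - ((vstar / 2 : ℝ) : ℂ) • 1
          = (μ - (vstar / 2 : ℝ)) • 1 := by
        rw [← sub_smul]
      rw [Algebra.algebraMap_eq_smul_one, hmap, ← Matrix.fromBlocks_one,
        Matrix.fromBlocks_smul, aux_fromBlocks_sub, smul_zero, sub_zero, zero_sub, e11, e22]
    rw [hblocks, Matrix.det_fromBlocks_zero₁₂, Matrix.det_smul, Matrix.det_smul, Matrix.det_one,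
      Fintype.card_fin]
    ring_nf
  have part2 : spectrum ℂ ((J * B₂).map (algebraMap ℝ ℂ)) =
      {((|vstar| / 2 : ℝ) : ℂ), -((|vstar| / 2 : ℝ) : ℂ)} := by
    ext μ
    rw [hmem μ]
    rw [mul_eq_zero, pow_eq_zero_iff hk.ne', pow_eq_zero_iff hk.ne',
      add_eq_zero_iff_eq_neg, sub_eq_zero]
    simp only [Set.mem_insert_iff, Set.mem_singleton_iff]
    rcases le_or_gt 0 vstar with h | h
    · rw [abs_of_nonneg h]
      push_cast
      tauto
    · rw [abs_of_neg h]
      push_cast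
      constructor
      · rintro (rfl | rfl) <;> [left; right] <;> ring
      · rintro (rfl | rfl) <;> [left; right] <;> ring
  refine ⟨part1, part2, ?_⟩
  intro μ hμ
  rw [part2] at hμ
  have habs : |vstar| / 2 ≠ 0 := by positivity
  rcases hμ with rfl | rfl <;> simp [habs]
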